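/- arXiv:1703.07230 — 2 statements merged into one kernel-verified Lean document; each statement's English description precedes it below -/
import Mathlib

section
/- Let δ ∈ (0,1), c > 1, and let I ⊂ ℤ^d be a finite frequency set with T := |I| ≥ 2 and expansion N_I ≤ c(T−1). Set λ := c(T−1), s := ⌈(c/(c−1))² (ln T − ln δ)/2⌉, and let M be the smallest prime larger than λ (so λ < M ≤ 2λ by Bertrand's postulate). If z_1,…,z_s are independent random vectors, each uniformly distributed on {0,…,M−1}^d ∩ ℤ^d, then with probability at least 1 − δ the multiple rank-1 lattice Λ(z_1,M,…,z_s,M) is reconstructing for I, and deterministically its number of sampling nodes satisfies 1 + s(M−1) ≤ s · 2c(T−1) < C_{c,δ} · T · ln T, where C_{c,δ} := 2c((c/(c−1))² (1 − log₂ δ)/2 + log₂ e). -/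
open scoped BigOperators

open Matrix

/-- helper: sum of roots of unity -/
lemma geom_exp_sum (M : ℕ) (hM : 0 < M) (m : ℤ) :
    ∑ j : Fin M, Complex.exp (2 * Real.pi * Complex.I * (((j : ℕ) : ℂ) / (M : ℂ)) * (m : ℂ)) =
      if (M : ℤ) ∣ m then (M : ℂ) else 0 := by
  have hM0 : (M : ℂ) ≠ 0 := by exact_mod_cast hM.ne'
  set ω : ℂ := Complex.exp (2 * Real.pi * Complex.I * ((m : ℂ) / (M : ℂ))) with hω
  have hterm : ∀ j : Fin M,
      Complex.exp (2 * Real.pi * Complex.I * (((j : ℕ) : ℂ) / (M : ℂ)) * (m : ℂ)) = ω ^ (j : ℕ) := by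
    intro j
    rw [hω, ← Complex.exp_nat_mul]
    ring_nf
  simp only [hterm]
  by_cases hdvd : (M : ℤ) ∣ m
  · have hω1 : ω = 1 := by
      obtain ⟨t, ht⟩ := hdvd
      have h2 : 2 * (Real.pi : ℂ) * Complex.I * ((m : ℂ) / (M : ℂ)) = (t : ℤ) * (2 * Real.pi * Complex.I) := by
        field_simp [ht]
        exact_mod_cast ht
      rw [hω, h2, Complex.exp_int_mul_two_pi_mul_I]
    simp [hdvd, hω1]
  · have hωM : ω ^ M = 1 := by
      rw [hω, ← Complex.exp_nat_mul]
      have : (M : ℂ) * (2 * Real.pi * Complex.I * ((m : ℂ) / (M : ℂ))) = (m : ℤ) * (2 * Real.pi * Complex.I) := by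
        field_simp
      rw [this, Complex.exp_int_mul_two_pi_mul_I]
    have hω1 : ω ≠ 1 := by
      intro h
      rw [hω, Complex.exp_eq_one_iff] at h
      obtain ⟨n, hn⟩ := h
      have h2πI : (2 * (Real.pi : ℂ) * Complex.I) ≠ 0 := by
        simp [Complex.I_ne_zero, Real.pi_ne_zero, Complex.ofReal_ne_zero]
      have hmn : (m : ℂ) = (n : ℂ) * (M : ℂ) := by
        have h1 : ((m : ℂ) / (M : ℂ)) * (2 * Real.pi * Complex.I)
            = (n : ℂ) * (2 * Real.pi * Complex.I) := by linear_combination hn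
        have h2 := mul_right_cancel₀ h2πI h1
        field_simp at h2
        linear_combination h2
      have hmn' : m = n * M := by exact_mod_cast hmn
      exact hdvd ⟨n, by linarith⟩
    rw [Fin.sum_univ_eq_sum_range (fun j => ω ^ j) M, geom_sum_eq hω1, hωM]
    simp [hdvd]

def finZmodEquiv (M : ℕ) [NeZero M] : Fin M ≃ ZMod M where
  toFun v := ((v : ℕ) : ZMod M)
  invFun x := ⟨x.val, x.val_lt⟩
  left_inv v := by ext; simp [ZMod.val_natCast_of_lt v.isLt]
  right_inv x := ZMod.natCast_rightInverse x

lemma card_ker {d : ℕ} (M : ℕ) [Fact M.Prime] (a : Fin d → ZMod M) (ha : ∃ i, a i ≠ 0) :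
    Fintype.card {v : Fin d → ZMod M // ∑ i, a i * v i = 0} = M ^ (d - 1) := by
  obtain ⟨i₀, hi₀⟩ := ha
  let φ : (Fin d → ZMod M) →ₗ[ZMod M] ZMod M :=
    { toFun := fun v => ∑ i, a i * v i
      map_add' := by intro x y; simp [mul_add, Finset.sum_add_distrib]
      map_smul' := by intro r x; simp [Finset.mul_sum]; congr 1; ext i; ring }
  have hsurj : Function.Surjective φ := by
    intro t
    refine ⟨fun i => if i = i₀ then (a i₀)⁻¹ * t else 0, ?_⟩
    have : ∀ i, a i * (if i = i₀ then (a i₀)⁻¹ * t else 0)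
        = if i = i₀ then t else 0 := by
      intro i
      by_cases h : i = i₀
      · subst h
        field_simp
        simp only [if_true]; rw [mul_comm]; exact div_mul_cancel₀ t hi₀
      · simp [h]
    simp only [φ, LinearMap.coe_mk, AddHom.coe_mk, this]
    simp
  have hker : Module.finrank (ZMod M) (LinearMap.ker φ) = d - 1 := by
    have h1 := LinearMap.finrank_range_add_finrank_ker φ
    rw [LinearMap.range_eq_top.mpr hsurj] at h1
    simp [Module.finrank_pi] at h1
    omega
  haveI : Fintype ↥(LinearMap.ker φ) := Fintype.ofFinite _
  have : Fintype.card {v : Fin d → ZMod M // ∑ i, a i * v i = 0}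
      = Fintype.card (LinearMap.ker φ) := by
    apply Fintype.card_congr
    exact Equiv.subtypeEquiv (Equiv.refl _) (fun v => by
      simp [φ, LinearMap.mem_ker])
  rw [this, Module.card_eq_pow_finrank (K := ZMod M), hker, ZMod.card]

lemma card_dot_zero {d M : ℕ} [Fact M.Prime] (b : Fin d → ℤ)
    (hb : ∃ i, ((b i : ZMod M)) ≠ 0) :
    (Finset.univ.filter (fun v : Fin d → Fin M =>
        ∑ i, ((b i : ZMod M)) * ((v i : ℕ) : ZMod M) = 0)).card = M ^ (d - 1) := by
  classical
  rw [← Fintype.card_subtype]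
  have : NeZero M := ⟨(Fact.out : M.Prime).ne_zero⟩
  have e : {v : Fin d → Fin M // ∑ i, ((b i : ZMod M)) * ((v i : ℕ) : ZMod M) = 0}
      ≃ {w : Fin d → ZMod M // ∑ i, ((b i : ZMod M)) * w i = 0} :=
    Equiv.subtypeEquiv (Equiv.piCongrRight (fun _ : Fin d => finZmodEquiv M)) (fun v => by
      simp [finZmodEquiv, Pi.map_apply])
  rw [Fintype.card_congr e]
  exact card_ker M (fun i => (b i : ZMod M)) hb

lemma log_lower {c : ℝ} (hc : 1 < c) : 2*(c-1)/(c+1) ≤ Real.log c := by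
  set f : ℝ → ℝ := fun x => Real.log x - 2*(x-1)/(x+1) with hf
  have hder : ∀ x : ℝ, 1 ≤ x → HasDerivAt f (x⁻¹ - 4/(x+1)^2) x := by
    intro x hx
    have h1 : HasDerivAt Real.log x⁻¹ x := Real.hasDerivAt_log (by linarith)
    have h2 : HasDerivAt (fun x : ℝ => 2*(x-1)/(x+1)) (4/(x+1)^2) x := by
      have ha : HasDerivAt (fun x : ℝ => 2*(x-1)) 2 x := by
        simpa using ((hasDerivAt_id x).sub_const 1).const_mul 2
      have hb : HasDerivAt (fun x : ℝ => x+1) 1 x := (hasDerivAt_id x).add_const 1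
      have hx1 : x + 1 ≠ 0 := by linarith
      have := (ha.div hb hx1 : HasDerivAt (fun y : ℝ => 2*(y-1)/(y+1)) _ x)
      refine this.congr_deriv ?_
      ring
    exact h1.sub h2
  have hmono : MonotoneOn f (Set.Ici 1) := by
    apply monotoneOn_of_deriv_nonneg (convex_Ici 1)
    · intro x hx
      exact ((hder x hx).continuousAt).continuousWithinAt
    · intro x hx
      rw [interior_Ici] at hx
      exact ((hder x (le_of_lt hx)).differentiableAt).differentiableWithinAt
    · intro x hx
      rw [interior_Ici] at hx
      rw [(hder x (le_of_lt hx)).deriv]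
      have hx0 : (0:ℝ) < x := by linarith [hx.out]
      have h4 : 4/(x+1)^2 ≤ 1/x := by
        rw [div_le_div_iff₀ (by positivity) hx0]
        nlinarith [sq_nonneg (x-1), hx.out]
      rw [sub_nonneg]
      calc 4/(x+1)^2 ≤ 1/x := h4
        _ = x⁻¹ := one_div x
  have h1 : f 1 ≤ f c := hmono (by simp) (by simp [le_of_lt hc]) (le_of_lt hc)
  have hf1 : f 1 = 0 := by simp [hf]
  rw [hf1, hf] at h1
  simp only at h1
  linarith

/-- The Fourier matrix of the multiple rank-1 lattice `Λ(z_1,M_1,…,z_s,M_s)` with respect to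
the frequency set `I`: the row indexed by `(ℓ, j)` and the column indexed by `k ∈ I` carry the
entry `e^{2πi (j/M_ℓ) k·z_ℓ}`. (The rows `j = 0` of the blocks `ℓ ≥ 2` are all-ones rows and
coincide with the row `(1, 0)`, so this matrix has the same rows — up to repetition — and in
particular the same column rank as the matrix obtained by stacking the block
`j = 0,…,M_1-1` and the blocks `j = 1,…,M_ℓ-1`, `ℓ ≥ 2`.) -/
noncomputable def multiFourier {d s : ℕ} (z : Fin s → Fin d → ℤ) (M : Fin s → ℕ)
    (I : Finset (Fin d → ℤ)) :
    Matrix ((ℓ : Fin s) × Fin (M ℓ)) {k // k ∈ I} ℂ :=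
  fun r k => Complex.exp (2 * Real.pi * Complex.I * (((r.2 : ℕ) : ℂ) / (M r.1 : ℂ)) *
    ((∑ i, k.1 i * z r.1 i : ℤ) : ℂ))

lemma rank_of_sep {d s : ℕ} (M : ℕ) (hM : 0 < M) (z : Fin s → Fin d → ℤ)
    (I : Finset (Fin d → ℤ))
    (hsep : ∀ k ∈ I, ∃ ℓ : Fin s, ∀ l ∈ I, l ≠ k →
      ¬ ((M : ℤ) ∣ ((∑ i, l i * z ℓ i) - (∑ i, k i * z ℓ i)))) :
    (multiFourier z (fun _ => M) I).rank = I.card := by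
  classical
  set A := multiFourier z (fun _ => M) I with hA
  have hli : LinearIndependent ℂ A.col := by
    rw [Fintype.linearIndependent_iff]
    intro g hg k₀
    obtain ⟨ℓ, hℓ⟩ := hsep k₀.1 k₀.2
    set a : {k // k ∈ I} → ℤ := fun k => ∑ i, k.1 i * z ℓ i with ha
    set E : Fin M → ℤ → ℂ := fun j m =>
      Complex.exp (2 * Real.pi * Complex.I * (((j : ℕ) : ℂ) / (M : ℂ)) * (m : ℂ)) with hE
    have hAE : ∀ (j : Fin M) (k : {k // k ∈ I}), A ⟨ℓ, j⟩ k = E j (a k) := fun j k => rfl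
    have hrow : ∀ j : Fin M, ∑ k : {k // k ∈ I}, g k * E j (a k) = 0 := by
      intro j
      have := congrFun hg ⟨ℓ, j⟩
      simpa [Finset.sum_apply, Matrix.col_apply, hAE] using this
    have hEadd : ∀ (j : Fin M) (m m' : ℤ), E j m * E j m' = E j (m + m') := by
      intro j m m'
      rw [hE, ← Complex.exp_add]
      push_cast
      ring_nf
    have h0 : ∑ k : {k // k ∈ I}, g k *
        ∑ j : Fin M, E j (a k - a k₀) = 0 := by
      have step1 : ∀ k : {k // k ∈ I}, g k * ∑ j : Fin M, E j (a k - a k₀)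
          = ∑ j : Fin M, (g k * E j (a k)) * E j (-(a k₀)) := by
        intro k
        rw [Finset.mul_sum]
        refine Finset.sum_congr rfl (fun j _ => ?_)
        rw [mul_assoc, hEadd, sub_eq_add_neg]
      simp only [step1]
      rw [Finset.sum_comm]
      refine Finset.sum_eq_zero (fun j _ => ?_)
      rw [← Finset.sum_mul, hrow, zero_mul]
    have hgeom : ∀ m : ℤ, ∑ j : Fin M, E j m = if (M : ℤ) ∣ m then (M : ℂ) else 0 := by
      intro m
      simp only [hE]
      exact geom_exp_sum M hM m
    have h1 : ∑ k : {k // k ∈ I}, g k *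
        (if (M : ℤ) ∣ (a k - a k₀) then (M : ℂ) else 0) = 0 := by
      simpa only [hgeom] using h0
    have h2 : g k₀ * (M : ℂ) = 0 := by
      rw [← h1]
      rw [Finset.sum_eq_single k₀]
      · simp
      · intro k _ hk
        have hne : k.1 ≠ k₀.1 := fun h => hk (Subtype.ext h)
        have := hℓ k.1 k.2 hne
        rw [if_neg (by simpa [ha, sub_eq_iff_eq_add] using this)]
        ring
      · intro h
        exact absurd (Finset.mem_univ k₀) h
    have hM0 : (M : ℂ) ≠ 0 := by exact_mod_cast hM.ne'
    exact (mul_eq_zero.mp h2).resolve_right hM0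
  rw [Matrix.rank_eq_finrank_span_cols, finrank_span_eq_card hli, Fintype.card_coe]

lemma part3_aux (Q L D g t σ : ℝ) (hQ : 0 < Q) (hg : 0 < g) (hgL : g ≤ L) (hD : D < 0)
    (ht : 1 ≤ t - 1) (hσ : σ < Q*(L-D)/2 + 1) :
    σ * (t - 1) < (Q*(1 - D/g)/2 + 1/g) * t * L := by
  have hL : 0 < L := lt_of_lt_of_le hg hgL
  have h1 : g * (t-1) ≤ t * L := by nlinarith
  have hpoly : g*(Q*(L-D)+2)*(t-1) ≤ (Q*(g-D)+2)*(t*L) := by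
    have t1 := mul_le_mul_of_nonneg_left h1 (mul_nonneg hQ.le (neg_nonneg.2 hD.le))
    have t2 := mul_le_mul_of_nonneg_left (show t-1 ≤ t by linarith)
        (mul_nonneg (mul_nonneg hQ.le hg.le) hL.le)
    nlinarith [t1, t2, h1]
  have hmid : (Q*(L - D)/2 + 1) * (t-1) ≤ (Q*(1 - D/g)/2 + 1/g)*t*L := by
    rw [← sub_nonneg]
    have expand : (Q*(1 - D/g)/2 + 1/g)*t*L - (Q*(L-D)/2 + 1) * (t-1)
        = ((Q*(g-D)+2)*(t*L) - g*(Q*(L-D)+2)*(t-1)) / (2*g) := by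
      field_simp
    rw [expand]
    exact div_nonneg (by linarith) (by linarith)
  exact lt_of_lt_of_le (mul_lt_mul_of_pos_right hσ (by linarith)) hmid

set_option maxHeartbeats 1000000 in
lemma Ts_aux {c δ : ℝ} (hc : 1 < c) (hδ0 : 0 < δ) (hδ1 : δ < 1) (T s : ℕ) (hT2 : 2 ≤ T)
    (hsA : (c/(c-1))^2 * (Real.log T - Real.log δ)/2 ≤ (s:ℝ)) :
    (T:ℝ) ≤ δ * c ^ s := by
  have hc1 : (0:ℝ) < c - 1 := by linarith
  have hTR : (2:ℝ) ≤ (T:ℝ) := by exact_mod_cast hT2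
  have hlogδ : Real.log δ < 0 := Real.log_neg hδ0 hδ1
  have hlogc : 0 < Real.log c := Real.log_pos hc
  have hdvd2 : 2*(c-1) ≤ Real.log c * (c+1) := (div_le_iff₀ (by linarith)).mp (log_lower hc)
  have hlogT : 0 < Real.log T := Real.log_pos (by exact_mod_cast (by omega : 1 < T))
  have hQlogc : (2:ℝ) ≤ (c/(c-1))^2 * Real.log c := by
    rw [div_pow, div_mul_eq_mul_div, le_div_iff₀ (by positivity)]
    nlinarith [mul_le_mul_of_nonneg_right hdvd2 (by linarith : (0:ℝ) ≤ c - 1), hlogc]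
  have hslog : Real.log T - Real.log δ ≤ s * Real.log c := by
    have h1 : ((c/(c-1))^2 * (Real.log T - Real.log δ)/2) * Real.log c ≤ (s:ℝ) * Real.log c :=
      mul_le_mul_of_nonneg_right hsA hlogc.le
    nlinarith [mul_le_mul_of_nonneg_right hQlogc
      (by linarith : (0:ℝ) ≤ (Real.log T - Real.log δ)/2), h1]
  have hlog2 : Real.log (T:ℝ) ≤ Real.log (δ * c ^ s) := by
    rw [Real.log_mul (ne_of_gt hδ0) (by positivity), Real.log_pow]
    linarith
  exact (Real.log_le_log_iff (by linarith) (by positivity)).mp hlog2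


set_option maxHeartbeats 1000000 in
/-- Corollary 3.3 / Algorithm 1 analysis: let `δ ∈ (0,1)`, `c > 1`,
`T = |I| ≥ 2`, expansion `N_I ≤ c(T-1)`, `s = ⌈(c/(c-1))² (ln T - ln δ)/2⌉`, and let `M` be
the smallest prime `> λ := c(T-1)`. For independent uniform `z_1,…,z_s ∈ {0,…,M-1}^d`, with
probability at least `1 - δ` the multiple rank-1 lattice `Λ(z_1,M,…,z_s,M)` is reconstructing
for `I` (full column rank `T` of its Fourier matrix), and deterministically
`1 + s(M-1) ≤ s · 2c(T-1) < C_{c,δ} · T · ln T` with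
`C_{c,δ} = 2c((c/(c-1))² (1 - log₂ δ)/2 + log₂ e)`. -/
theorem statement10 {d : ℕ} (I : Finset (Fin d → ℤ)) (δ c : ℝ)
    (hδ0 : 0 < δ) (hδ1 : δ < 1) (hc : 1 < c)
    (T : ℕ) (hT : I.card = T) (hT2 : 2 ≤ T)
    (hNI : ∀ k ∈ I, ∀ l ∈ I, ∀ j, ((k j - l j : ℤ) : ℝ) ≤ c * ((T : ℝ) - 1))
    (s : ℕ) (hs : s = Nat.ceil ((c / (c - 1)) ^ 2 * (Real.log T - Real.log δ) / 2))
    (M : ℕ) (hMp : M.Prime) (hMgt : c * ((T : ℝ) - 1) < M)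
    (hMmin : ∀ p : ℕ, p.Prime → c * ((T : ℝ) - 1) < p → M ≤ p) :
    ((1 - δ) * ((M : ℝ) ^ d) ^ s ≤
        (Nat.card {z : Fin s → Fin d → Fin M //
          (multiFourier (fun ℓ i => ((z ℓ i : ℕ) : ℤ)) (fun _ => M) I).rank = T} : ℝ))
    ∧ ((1 : ℝ) + s * ((M : ℝ) - 1)) ≤ s * (2 * c * ((T : ℝ) - 1))
    ∧ (s : ℝ) * (2 * c * ((T : ℝ) - 1)) <
        (2 * c * ((c / (c - 1)) ^ 2 * (1 - Real.logb 2 δ) / 2 + Real.logb 2 (Real.exp 1)))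
          * T * Real.log T := by
  classical
  haveI : Fact M.Prime := ⟨hMp⟩
  haveI : NeZero M := ⟨hMp.ne_zero⟩
  have hM0 : 0 < M := hMp.pos
  have hc0 : (0:ℝ) < c := by linarith
  have hc1 : (0:ℝ) < c - 1 := by linarith
  have hTR : (2:ℝ) ≤ (T:ℝ) := by exact_mod_cast hT2
  have hT1R : (1:ℝ) ≤ (T:ℝ) - 1 := by linarith
  have hlam : (0:ℝ) < c * ((T:ℝ)-1) := by nlinarith
  -- Bertrand: M ≤ 2 c (T-1)
  have hMle : (M:ℝ) ≤ 2 * c * ((T:ℝ)-1) := by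
    have h1 : 1 ≤ ⌊c * ((T:ℝ)-1)⌋₊ := by
      rw [Nat.le_floor_iff (le_of_lt hlam)]
      push_cast
      nlinarith
    obtain ⟨p, pp, hp1, hp2⟩ := Nat.exists_prime_lt_and_le_two_mul ⌊c * ((T:ℝ)-1)⌋₊ (by omega)
    have hplam : c * ((T:ℝ)-1) < p := by
      have hfl : c * ((T:ℝ)-1) < ⌊c * ((T:ℝ)-1)⌋₊ + 1 := Nat.lt_floor_add_one _
      have hple : (⌊c * ((T:ℝ)-1)⌋₊:ℝ) + 1 ≤ p := by exact_mod_cast hp1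
      linarith
    have hMp' := hMmin p pp hplam
    have hfloor : (⌊c * ((T:ℝ)-1)⌋₊ : ℝ) ≤ c * ((T:ℝ)-1) := Nat.floor_le (le_of_lt hlam)
    have hp2' : (p:ℝ) ≤ 2 * (⌊c * ((T:ℝ)-1)⌋₊ : ℝ) := by exact_mod_cast hp2
    have hMpR : (M:ℝ) ≤ (p:ℝ) := by exact_mod_cast hMp'
    linarith
  -- facts about s
  have hlogT : 0 < Real.log T := Real.log_pos (by exact_mod_cast hT2 : (1:ℝ) < T)
  have hlogδ : Real.log δ < 0 := Real.log_neg hδ0 hδ1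
  have hQ : (0:ℝ) < (c/(c-1))^2 := by positivity
  have hA0 : (0:ℝ) < (c / (c - 1)) ^ 2 * (Real.log T - Real.log δ) / 2 :=
    div_pos (mul_pos hQ (by linarith)) two_pos
  have hs1 : 1 ≤ s := by
    rw [hs]
    exact Nat.ceil_pos.mpr hA0
  have hs1R : (1:ℝ) ≤ (s:ℝ) := by exact_mod_cast hs1
  have hsA : (c / (c - 1)) ^ 2 * (Real.log T - Real.log δ) / 2 ≤ (s:ℝ) := by
    rw [hs]; exact Nat.le_ceil _
  have hsub : (s:ℝ) < (c / (c - 1)) ^ 2 * (Real.log T - Real.log δ) / 2 + 1 := by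
    rw [hs]; exact Nat.ceil_lt_add_one (le_of_lt hA0)
  have hM2R : (2:ℝ) ≤ (M:ℝ) := by exact_mod_cast hMp.two_le
  refine ⟨?_, ?_, ?_⟩
  · -- PART 1: the probabilistic bound
    have hd1 : 1 ≤ d := by
      by_contra hd
      push_neg at hd
      interval_cases d
      have hsub : ∀ a b : Fin 0 → ℤ, a = b := fun a b => funext (fun i => i.elim0)
      have : I.card ≤ 1 := Finset.card_le_one.mpr (fun a _ b _ => hsub a b)
      omega
    have hkey : ∀ k ∈ I, ∀ l ∈ I, l ≠ k → ∃ i, ((l i - k i : ℤ) : ZMod M) ≠ 0 := by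
      intro k hk l hl hlk
      obtain ⟨i, hi⟩ : ∃ i, l i ≠ k i := by
        by_contra h
        push_neg at h
        exact hlk (funext h)
      refine ⟨i, ?_⟩
      rw [Ne, ZMod.intCast_zmod_eq_zero_iff_dvd]
      intro hdvd
      have hne : l i - k i ≠ 0 := sub_ne_zero.mpr hi
      have hMabs : (M:ℤ) ≤ |l i - k i| := Int.le_of_dvd (abs_pos.mpr hne) ((dvd_abs _ _).mpr hdvd)
      have ha := hNI l hl k hk i
      have hb := hNI k hk l hl i
      have h1 : ((|l i - k i| : ℤ) : ℝ) < (M:ℝ) := by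
        push_cast
        rw [abs_sub_lt_iff]
        constructor <;> push_cast at ha hb <;> linarith
      have h2 : ((M:ℤ) : ℝ) ≤ ((|l i - k i| : ℤ) : ℝ) := by exact_mod_cast hMabs
      push_cast at h1 h2
      linarith
    set P : (Fin s → Fin d → Fin M) → Prop := fun zz => ∀ k ∈ I, ∃ ℓ : Fin s, ∀ l ∈ I, l ≠ k →
      (∑ i, ((l i - k i : ℤ) : ZMod M) * ((zz ℓ i : ℕ) : ZMod M)) ≠ 0 with hP
    have hrank : ∀ zz : Fin s → Fin d → Fin M, P zz →
        (multiFourier (fun ℓ i => ((zz ℓ i : ℕ) : ℤ)) (fun _ => M) I).rank = T := by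
      intro zz hPz
      rw [← hT]
      apply rank_of_sep M hM0
      intro k hk
      obtain ⟨ℓ, hℓ⟩ := hPz k hk
      refine ⟨ℓ, fun l hl hlk => ?_⟩
      intro hdvd
      apply hℓ l hl hlk
      have heq : (∑ i, l i * ((zz ℓ i : ℕ):ℤ)) - (∑ i, k i * ((zz ℓ i :ℕ):ℤ))
          = ∑ i, (l i - k i) * ((zz ℓ i : ℕ):ℤ) := by
        rw [← Finset.sum_sub_distrib]
        exact Finset.sum_congr rfl (fun i _ => by ring)
      rw [heq] at hdvd
      have h0 : ((∑ i, (l i - k i) * ((zz ℓ i : ℕ):ℤ) : ℤ) : ZMod M) = 0 :=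
        (ZMod.intCast_zmod_eq_zero_iff_dvd _ M).mpr hdvd
      calc ∑ i, ((l i - k i : ℤ) : ZMod M) * ((zz ℓ i : ℕ) : ZMod M)
          = ((∑ i, (l i - k i) * ((zz ℓ i : ℕ):ℤ) : ℤ) : ZMod M) := by push_cast; rfl
        _ = 0 := h0
    have hcard_good : (Finset.univ.filter P).card ≤
        Nat.card {z : Fin s → Fin d → Fin M //
          (multiFourier (fun ℓ i => ((z ℓ i : ℕ) : ℤ)) (fun _ => M) I).rank = T} := by
      rw [Nat.card_eq_fintype_card, Fintype.card_subtype]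
      apply Finset.card_le_card
      intro zz hz
      rw [Finset.mem_filter] at hz ⊢
      exact ⟨hz.1, hrank zz hz.2⟩
    have hBk : ∀ k ∈ I, (Finset.univ.filter (fun v : Fin d → Fin M =>
        ∃ l ∈ I, l ≠ k ∧ ∑ i, ((l i - k i : ℤ) : ZMod M) * ((v i : ℕ) : ZMod M) = 0)).card
        ≤ (T - 1) * M ^ (d - 1) := by
      intro k hk
      have hsub2 : Finset.univ.filter (fun v : Fin d → Fin M =>
          ∃ l ∈ I, l ≠ k ∧ ∑ i, ((l i - k i : ℤ) : ZMod M) * ((v i : ℕ) : ZMod M) = 0)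
          ⊆ (I.erase k).biUnion (fun l => Finset.univ.filter (fun v : Fin d → Fin M =>
            ∑ i, ((l i - k i : ℤ) : ZMod M) * ((v i : ℕ) : ZMod M) = 0)) := by
        intro v hv
        simp only [Finset.mem_filter, Finset.mem_univ, true_and] at hv
        obtain ⟨l, hl, hlk, h0⟩ := hv
        refine Finset.mem_biUnion.mpr ⟨l, Finset.mem_erase.mpr ⟨hlk, hl⟩, ?_⟩
        simp only [Finset.mem_filter, Finset.mem_univ, true_and]
        exact h0
      refine (Finset.card_le_card hsub2).trans ?_
      refine (Finset.card_biUnion_le).trans ?_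
      have hcards : ∀ l ∈ I.erase k, (Finset.univ.filter (fun v : Fin d → Fin M =>
          ∑ i, ((l i - k i : ℤ) : ZMod M) * ((v i : ℕ) : ZMod M) = 0)).card = M ^ (d-1) := by
        intro l hl
        rw [Finset.mem_erase] at hl
        exact card_dot_zero _ (hkey k hk l hl.2 hl.1)
      calc ∑ l ∈ I.erase k, (Finset.univ.filter (fun v : Fin d → Fin M =>
            ∑ i, ((l i - k i : ℤ) : ZMod M) * ((v i : ℕ) : ZMod M) = 0)).card
          = ∑ _l ∈ I.erase k, M^(d-1) := Finset.sum_congr rfl hcards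
        _ = (I.erase k).card * M^(d-1) := by rw [Finset.sum_const, smul_eq_mul]
        _ = (T-1) * M^(d-1) := by rw [Finset.card_erase_of_mem hk, hT]
        _ ≤ (T-1) * M^(d-1) := le_rfl
    have hbad : (Finset.univ.filter (fun zz => ¬ P zz)).card ≤ T * ((T-1) * M^(d-1))^s := by
      have hsub3 : Finset.univ.filter (fun zz => ¬ P zz) ⊆ I.biUnion (fun k =>
          Fintype.piFinset (fun _ : Fin s => Finset.univ.filter (fun v : Fin d → Fin M =>
            ∃ l ∈ I, l ≠ k ∧ ∑ i, ((l i - k i : ℤ) : ZMod M) * ((v i : ℕ) : ZMod M) = 0))) := by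
        intro zz hz
        rw [Finset.mem_filter] at hz
        have hz2 := hz.2
        simp only [hP] at hz2
        push_neg at hz2
        obtain ⟨k, hk, hall⟩ := hz2
        refine Finset.mem_biUnion.mpr ⟨k, hk, ?_⟩
        rw [Fintype.mem_piFinset]
        intro ℓ
        obtain ⟨l, hl, hlk, h0⟩ := hall ℓ
        simp only [Finset.mem_filter, Finset.mem_univ, true_and]
        exact ⟨l, hl, hlk, h0⟩
      refine (Finset.card_le_card hsub3).trans ?_
      refine (Finset.card_biUnion_le).trans ?_
      have hstep : ∀ k ∈ I, (Fintype.piFinset (fun _ : Fin s =>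
          Finset.univ.filter (fun v : Fin d → Fin M =>
            ∃ l ∈ I, l ≠ k ∧ ∑ i, ((l i - k i : ℤ) : ZMod M) * ((v i : ℕ) : ZMod M) = 0))).card
          ≤ ((T-1) * M^(d-1))^s := by
        intro k hk
        rw [Fintype.card_piFinset]
        calc ∏ _ℓ : Fin s, (Finset.univ.filter (fun v : Fin d → Fin M =>
              ∃ l ∈ I, l ≠ k ∧ ∑ i, ((l i - k i : ℤ) : ZMod M) * ((v i : ℕ) : ZMod M) = 0)).card
            = (Finset.univ.filter (fun v : Fin d → Fin M =>
              ∃ l ∈ I, l ≠ k ∧ ∑ i, ((l i - k i : ℤ) : ZMod M) * ((v i : ℕ) : ZMod M) = 0)).card ^ s := by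
              rw [Finset.prod_const, Finset.card_univ, Fintype.card_fin]
          _ ≤ ((T-1) * M^(d-1))^s := Nat.pow_le_pow_left (hBk k hk) s
      calc ∑ k ∈ I, (Fintype.piFinset (fun _ : Fin s =>
            Finset.univ.filter (fun v : Fin d → Fin M =>
              ∃ l ∈ I, l ≠ k ∧ ∑ i, ((l i - k i : ℤ) : ZMod M) * ((v i : ℕ) : ZMod M) = 0))).card
          ≤ ∑ _k ∈ I, ((T-1) * M^(d-1))^s := Finset.sum_le_sum hstep
        _ = T * ((T-1) * M^(d-1))^s := by rw [Finset.sum_const, smul_eq_mul, hT]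
    have htotal : (Finset.univ.filter P).card + (Finset.univ.filter (fun zz => ¬ P zz)).card
        = (M^d)^s := by
      rw [Finset.card_filter_add_card_filter_not, Finset.card_univ]
      simp [Fintype.card_fun, Fintype.card_fin]
    -- real arithmetic
    have hTs : (T:ℝ) ≤ δ * c ^ s := Ts_aux hc hδ0 hδ1 T s hT2 hsA
    have hpow : ((T:ℝ)-1)^s ≤ ((M:ℝ)/c)^s :=
      pow_le_pow_left₀ (by linarith) (by rw [le_div_iff₀ hc0]; nlinarith [hMgt]) s
    have hbadR : ((T:ℝ)) * (((T:ℝ)-1) * (M:ℝ)^(d-1))^s ≤ δ * ((M:ℝ)^d)^s := by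
      have e0 : (M:ℝ)^d = (M:ℝ)^(d-1) * (M:ℝ) := by
        calc (M:ℝ)^d = (M:ℝ)^((d-1)+1) := by rw [Nat.sub_add_cancel hd1]
          _ = (M:ℝ)^(d-1) * (M:ℝ) := pow_succ _ _
      have hcs : (0:ℝ) < c ^ s := by positivity
      calc (T:ℝ) * (((T:ℝ)-1) * (M:ℝ)^(d-1))^s
          = ((T:ℝ) * ((T:ℝ)-1)^s) * ((M:ℝ)^(d-1))^s := by rw [mul_pow]; ring
        _ ≤ ((δ * c^s) * ((M:ℝ)/c)^s) * ((M:ℝ)^(d-1))^s := by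
            apply mul_le_mul_of_nonneg_right _ (by positivity)
            exact mul_le_mul hTs hpow (by positivity) (by positivity)
        _ = δ * ((M:ℝ)^(d-1) * (M:ℝ))^s := by
            rw [div_pow, mul_pow]
            field_simp
        _ = δ * ((M:ℝ)^d)^s := by rw [← e0]
    have ht' : ((Finset.univ.filter P).card : ℝ)
        + ((Finset.univ.filter (fun zz => ¬ P zz)).card : ℝ) = ((M:ℝ)^d)^s := by
      exact_mod_cast htotal
    have hb' : ((Finset.univ.filter (fun zz => ¬ P zz)).card : ℝ)
        ≤ (T:ℝ) * (((T:ℝ)-1) * (M:ℝ)^(d-1))^s := by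
      calc ((Finset.univ.filter (fun zz => ¬ P zz)).card : ℝ)
          ≤ ((T * ((T-1) * M^(d-1))^s : ℕ) : ℝ) := by exact_mod_cast hbad
        _ = (T:ℝ) * (((T:ℝ)-1) * (M:ℝ)^(d-1))^s := by
            rw [Nat.cast_mul, Nat.cast_pow, Nat.cast_mul, Nat.cast_pow,
              Nat.cast_sub (le_trans one_le_two hT2), Nat.cast_one]
    calc (1 - δ) * ((M:ℝ)^d)^s = ((M:ℝ)^d)^s - δ * ((M:ℝ)^d)^s := by ring
      _ ≤ ((Finset.univ.filter P).card : ℝ) := by linarith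
      _ ≤ _ := by exact_mod_cast hcard_good
  · -- PART 2
    nlinarith [hMle, hs1R]
  · -- PART 3
    have hg : 0 < Real.log 2 := Real.log_pos one_lt_two
    have hL2 : Real.log 2 ≤ Real.log T := Real.log_le_log (by norm_num) hTR
    rw [Real.logb, Real.logb, Real.log_exp]
    have haux := part3_aux ((c/(c-1))^2) (Real.log T) (Real.log δ) (Real.log 2) (T:ℝ) (s:ℝ)
      hQ hg hL2 hlogδ (by linarith) hsub
    calc (s:ℝ) * (2*c*((T:ℝ)-1)) = 2*c*((s:ℝ)*((T:ℝ)-1)) := by ring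
      _ < 2*c*(((c/(c-1))^2*(1 - Real.log δ/Real.log 2)/2 + 1/Real.log 2)*(T:ℝ)*Real.log T) :=
          mul_lt_mul_of_pos_left haux (by linarith)
      _ = (2 * c * ((c / (c - 1)) ^ 2 * (1 - Real.log δ / Real.log 2) / 2 + 1 / Real.log 2))
          * (T:ℝ) * Real.log T := by ring
end

section
/- Let I ⊂ ℤ^d be a finite frequency set with T := |I| ≥ 2 and expansion N_I, let T₁ ≥ T be an integer, let δ ∈ (0,1) and c > 1, let λ ≥ max{c(T−1), N_I}, let s be an integer with s ≥ (c/(c−1))² (ln T + ln T₁ − ln δ)/2, and let M be a prime with M > λ. If z_1,…,z_s are independent random vectors, each uniformly distributed on {0,…,M−1}^d ∩ ℤ^d, then with probability at least 1 − δ/T₁ there exists ℓ ∈ {1,…,s} such that the set I_ℓ := {k ∈ I : k·z_ℓ ≢ h·z_ℓ (mod M) for all h ∈ I∖{k}} satisfies |I_ℓ| ≥ T/s; that is, the best of the s random generating vectors allows the unique reconstruction of at least T/s of the Fourier coefficients of every p ∈ Π_I from samples on the single rank-1 lattice Λ(z_ℓ, M). -/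
open scoped BigOperators
open Finset

private lemma card_filter_not_eq' {α : Type*} (I : Finset α) (T : ℕ) (hT : I.card = T)
    (p : α → Prop) [DecidablePred p] :
    T - (I.filter p).card = (I.filter fun k => ¬ p k).card := by
  have := Finset.card_filter_add_card_filter_not (s := I) (p := p)
  rw [hT] at this
  omega

private lemma count_dvd_le' {d M : ℕ} (hM : M.Prime) (a : Fin d → ℤ) (j : Fin d)
    (hj : ¬ (M:ℤ) ∣ a j) :
    (Finset.univ.filter fun z : Fin d → Fin M =>
        (M:ℤ) ∣ ∑ i, a i * ((z i : ℕ) : ℤ)).card ≤ M ^ (d-1) := by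
  classical
  have hcard : Fintype.card ({i : Fin d // i ≠ j} → Fin M) = M ^ (d-1) := by
    rw [Fintype.card_fun, Fintype.card_fin]
    congr 1
    have : Fintype.card {i : Fin d // i ≠ j} = Fintype.card {i : Fin d // ¬ (i = j)} := rfl
    rw [this, Fintype.card_subtype_compl, Fintype.card_subtype_eq, Fintype.card_fin]
  have key : (Finset.univ.filter fun z : Fin d → Fin M =>
        (M:ℤ) ∣ ∑ i, a i * ((z i : ℕ) : ℤ)).card ≤
      (Finset.univ : Finset ({i : Fin d // i ≠ j} → Fin M)).card := by
    apply Finset.card_le_card_of_injOn (fun z (i : {i : Fin d // i ≠ j}) => z i.1)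
      (fun z _ => Finset.mem_univ _)
    intro z hz w hw hzw
    rw [Finset.mem_coe, Finset.mem_filter] at hz hw
    have hdiff : (M:ℤ) ∣ ∑ i, a i * ((z i : ℕ) : ℤ) - ∑ i, a i * ((w i : ℕ) : ℤ) :=
      dvd_sub hz.2 hw.2
    have hsum : ∑ i, a i * ((z i : ℕ) : ℤ) - ∑ i, a i * ((w i : ℕ) : ℤ)
        = a j * (((z j : ℕ) : ℤ) - ((w j : ℕ) : ℤ)) := by
      rw [← Finset.sum_sub_distrib]
      rw [Finset.sum_eq_single j]
      · ring
      · intro i _ hij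
        have : z i = w i := congrFun hzw ⟨i, hij⟩
        rw [this]; ring
      · intro h; exact absurd (Finset.mem_univ j) h
    rw [hsum] at hdiff
    have hMdvd : (M:ℤ) ∣ (((z j : ℕ) : ℤ) - ((w j : ℕ) : ℤ)) :=
      ((Nat.prime_iff_prime_int.mp hM).dvd_mul.mp hdiff).resolve_left hj
    have hzj : ((z j : ℕ) : ℤ) < M := by exact_mod_cast (z j).isLt
    have hwj : ((w j : ℕ) : ℤ) < M := by exact_mod_cast (w j).isLt
    have h0z : (0:ℤ) ≤ ((z j : ℕ) : ℤ) := Int.ofNat_nonneg _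
    have h0w : (0:ℤ) ≤ ((w j : ℕ) : ℤ) := Int.ofNat_nonneg _
    have heq0 : (((z j : ℕ) : ℤ) - ((w j : ℕ) : ℤ)) = 0 := by
      apply Int.eq_zero_of_abs_lt_dvd hMdvd
      rw [abs_sub_lt_iff]
      constructor <;> linarith
    have hzw' : z j = w j := by
      have : ((z j : ℕ) : ℤ) = ((w j : ℕ) : ℤ) := by linarith
      exact Fin.ext (by exact_mod_cast this)
    funext i
    by_cases hij : i = j
    · subst hij; exact hzw'
    · exact congrFun hzw ⟨i, hij⟩
  rwa [Finset.card_univ, hcard] at key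

private lemma poly_core' {u : ℝ} (hu0 : 0 ≤ u) (hu1 : u < 1) :
    2 * (1 - u^4)^2 ≤ 4 * (1 - u) := by
  by_cases hw : 1 - u - u^3 ≤ 0
  · nlinarith [sq_nonneg (1 - u - u^3), mul_nonneg hu0 (sq_nonneg (1-u)),
      mul_nonneg (pow_nonneg hu0 4) (by linarith : (0:ℝ) ≤ -(1 - u - u^3))]
  · push_neg at hw
    nlinarith [sq_nonneg (1 - u - u^3 - u^4/2), mul_nonneg hu0 (sq_nonneg (1-u)),
      mul_nonneg (mul_nonneg hu0 hu0) hw.le, mul_nonneg (pow_nonneg hu0 4) hw.le,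
      mul_nonneg (pow_nonneg hu0 3) hw.le, sq_nonneg u, pow_nonneg hu0 4,
      mul_nonneg (pow_nonneg hu0 4) (by linarith : (0:ℝ) ≤ 1 - u)]

private lemma log_ge_aux' {c : ℝ} (hc : 1 < c) : 2 * ((c - 1) / c) ^ 2 ≤ Real.log c := by
  have hc0 : (0:ℝ) < c := by linarith
  set r : ℝ := c ^ ((1:ℝ)/4) with hr
  have hr1 : 1 < r := by
    rw [hr]
    apply Real.one_lt_rpow_iff_of_pos hc0 |>.mpr
    exact Or.inl ⟨hc, by norm_num⟩
  have hr0 : (0:ℝ) < r := by linarith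
  have hr4 : r ^ (4:ℕ) = c := by
    rw [hr, ← Real.rpow_natCast (c ^ ((1:ℝ)/4)) 4, ← Real.rpow_mul hc0.le]
    norm_num
  have hlog : Real.log c = 4 * Real.log r := by
    rw [← hr4, Real.log_pow]; push_cast; ring
  have hlogr : 1 - r⁻¹ ≤ Real.log r := Real.one_sub_inv_le_log_of_pos hr0
  set u : ℝ := r⁻¹ with hu
  have hu0 : (0:ℝ) ≤ u := by positivity
  have hu1 : u < 1 := by rw [hu]; exact inv_lt_one_of_one_lt₀ hr1
  have hinvc : u ^ (4:ℕ) = c⁻¹ := by rw [hu, ← hr4, inv_pow]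
  have hkey : 2 * ((c - 1) / c) ^ 2 ≤ 4 * (1 - u) := by
    have h1 : (c - 1) / c = 1 - c⁻¹ := by field_simp
    rw [h1, ← hinvc]
    exact poly_core' hu0 hu1
  calc 2 * ((c - 1) / c) ^ 2 ≤ 4 * (1 - u) := hkey
    _ ≤ 4 * Real.log r := by linarith
    _ = Real.log c := hlog.symm

private lemma pow_aux' {T s q : ℕ} (hT : 2 ≤ T) (hs : 1 ≤ s) (hq : q * s ≤ T - 1) :
    (T:ℝ)^s ≤ (T:ℝ) * ((T - q : ℕ):ℝ)^s := by
  have hqq : q ≤ q * s := Nat.le_mul_of_pos_right q (by omega)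
  have hqT : q < T := by omega
  have hcast : ((T - q : ℕ):ℝ) = (T:ℝ) - q := by
    have : q ≤ T := hqT.le
    push_cast [this]; ring
  have hqs : (q:ℝ) * s ≤ (T:ℝ) - 1 := by
    have : ((q * s : ℕ):ℝ) ≤ ((T - 1 : ℕ):ℝ) := by exact_mod_cast hq
    push_cast [show 1 ≤ T by omega] at this
    linarith
  have hT0 : (0:ℝ) < T := by positivity
  set x : ℝ := (q:ℝ) / T with hx
  have hx0 : (0:ℝ) ≤ x := by positivity
  have hx1 : x < 1 := by
    rw [hx, div_lt_one hT0]; exact_mod_cast hqT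
  have hbern : 1 + (s:ℝ) * (-x) ≤ (1 + (-x)) ^ s :=
    one_add_mul_le_pow (by linarith : (-2:ℝ) ≤ -x) s
  have hTx : (T:ℝ) * (1 + (-x)) = (T:ℝ) - q := by
    rw [hx]; field_simp; ring
  have key : (T:ℝ)^s * (1 + (s:ℝ)*(-x)) ≤ ((T:ℝ) - q)^s := by
    calc (T:ℝ)^s * (1 + (s:ℝ)*(-x)) ≤ (T:ℝ)^s * (1 + (-x))^s := by
          apply mul_le_mul_of_nonneg_left hbern (by positivity)
      _ = ((T:ℝ) * (1 + (-x)))^s := (mul_pow _ _ _).symm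
      _ = ((T:ℝ) - q)^s := by rw [hTx]
  have h1 : 1 ≤ (T:ℝ) * (1 + (s:ℝ)*(-x)) := by
    have : (T:ℝ) * (1 + (s:ℝ)*(-x)) = (T:ℝ) - (q:ℝ)*s := by
      rw [hx]; field_simp; ring
    rw [this]; linarith
  rw [hcast]
  calc (T:ℝ)^s = (T:ℝ)^s * 1 := by ring
    _ ≤ (T:ℝ)^s * ((T:ℝ) * (1 + (s:ℝ)*(-x))) := by
        apply mul_le_mul_of_nonneg_left h1 (by positivity)
    _ = (T:ℝ) * ((T:ℝ)^s * (1 + (s:ℝ)*(-x))) := by ring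
    _ ≤ (T:ℝ) * ((T:ℝ) - q)^s := by
        apply mul_le_mul_of_nonneg_left key hT0.le

private lemma exp_bound' {c : ℝ} (hc : 1 < c) {L : ℝ} (hL : 0 ≤ L) {s : ℕ}
    (hs : (c / (c-1)) ^ 2 * L / 2 ≤ s) : Real.exp L ≤ c ^ s := by
  have hc0 : (0:ℝ) < c := by linarith
  have hc1 : c - 1 ≠ 0 := by intro h; rw [sub_eq_zero] at h; exact absurd h.symm hc.ne
  have hlogc : 2 * ((c - 1) / c) ^ 2 ≤ Real.log c := log_ge_aux' hc
  have hlog0 : (0:ℝ) ≤ Real.log c := Real.log_nonneg hc.le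
  have hA0 : (0:ℝ) ≤ (c / (c-1)) ^ 2 * L / 2 := by positivity
  have hLs : L ≤ (s:ℝ) * Real.log c := by
    have h2 : (c / (c-1)) ^ 2 * L / 2 * (2 * ((c - 1) / c) ^ 2) = L := by
      field_simp
    calc L = (c / (c-1)) ^ 2 * L / 2 * (2 * ((c - 1) / c) ^ 2) := h2.symm
      _ ≤ (c / (c-1)) ^ 2 * L / 2 * Real.log c :=
          mul_le_mul_of_nonneg_left hlogc hA0
      _ ≤ (s:ℝ) * Real.log c := mul_le_mul_of_nonneg_right hs hlog0
  calc Real.exp L ≤ Real.exp ((s:ℝ) * Real.log c) := Real.exp_le_exp.mpr hLs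
    _ = c ^ s := by
        rw [← Real.log_pow, Real.exp_log (by positivity)]

set_option maxHeartbeats 2000000 in
/-- step of Theorem 4.1: let `T = |I| ≥ 2`, `T ≤ T₁`, `δ ∈ (0,1)`, `c > 1`,
`λ ≥ max{c(T-1), N_I}`, `s ≥ (c/(c-1))² (ln T + ln T₁ - ln δ)/2`, and let `M` be a prime
`> λ`. For independent uniform `z_1,…,z_s ∈ {0,…,M-1}^d`, with probability at least
`1 - δ/T₁` there is an `ℓ` such that the set
`I_ℓ = {k ∈ I : k·z_ℓ ≢ h·z_ℓ (mod M) ∀ h ∈ I∖{k}}` of non-aliasing frequencies satisfies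
`|I_ℓ| ≥ T/s`, i.e. the best of the `s` random generating vectors allows the unique
reconstruction of at least `T/s` Fourier coefficients from samples on `Λ(z_ℓ, M)`. -/
theorem statement14 {d : ℕ} (I : Finset (Fin d → ℤ)) (T T1 : ℕ) (hT : I.card = T)
    (hT2 : 2 ≤ T) (hTT1 : T ≤ T1)
    (δ c lam : ℝ) (hδ0 : 0 < δ) (hδ1 : δ < 1) (hc : 1 < c)
    (hlam1 : c * ((T : ℝ) - 1) ≤ lam)
    (hlam2 : ∀ k ∈ I, ∀ l ∈ I, ∀ j, ((k j - l j : ℤ) : ℝ) ≤ lam)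
    (s : ℕ) (hs : (c / (c - 1)) ^ 2 * (Real.log T + Real.log T1 - Real.log δ) / 2 ≤ s)
    (M : ℕ) (hMp : M.Prime) (hMgt : lam < M) :
    (1 - δ / T1) * ((M : ℝ) ^ d) ^ s ≤
      (Nat.card {z : Fin s → Fin d → Fin M //
        ∃ ℓ : Fin s, (T : ℝ) / s ≤
          ((I.filter fun k => ∀ h ∈ I, h ≠ k →
            (∑ i, k i * ((z ℓ i : ℕ) : ℤ)) % (M : ℤ)
              ≠ (∑ i, h i * ((z ℓ i : ℕ) : ℤ)) % (M : ℤ)).card : ℝ)} : ℝ) := by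
  classical
  -- basic positivity facts
  have hT1pos : 2 ≤ T1 := le_trans hT2 hTT1
  have hlogT : 0 < Real.log T := Real.log_pos (by exact_mod_cast hT2)
  have hlogT1 : 0 < Real.log T1 := Real.log_pos (by exact_mod_cast hT1pos)
  have hlogδ : Real.log δ < 0 := Real.log_neg hδ0 hδ1
  set L : ℝ := Real.log T + Real.log T1 - Real.log δ with hLdef
  have hL0 : 0 < L := by simp only [hLdef]; linarith
  have hcm1 : (0:ℝ) < c - 1 := by linarith
  have hspos : 0 < s := by
    by_contra h
    push_neg at h
    interval_cases s
    have : (0:ℝ) < (c / (c-1))^2 * L / 2 := by positivity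
    simp only [Nat.cast_zero] at hs
    linarith
  have hsR : (0:ℝ) < (s:ℕ) := by exact_mod_cast hspos
  have hd : 1 ≤ d := by
    by_contra h
    push_neg at h
    interval_cases d
    obtain ⟨a, ha, b, hb, hab⟩ := Finset.one_lt_card.mp (by omega : 1 < I.card)
    exact hab (funext fun i => i.elim0)
  have hMpos : 0 < M := hMp.pos
  have hMR : (0:ℝ) < M := by exact_mod_cast hMpos
  -- the non-aliasing count
  set G : (Fin d → Fin M) → ℕ := fun w =>
    (I.filter fun k => ∀ h ∈ I, h ≠ k →
      (∑ i, k i * ((w i : ℕ) : ℤ)) % (M : ℤ)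
        ≠ (∑ i, h i * ((w i : ℕ) : ℤ)) % (M : ℤ)).card with hGdef
  -- aliasing sum bound
  have hGle : ∀ w, G w ≤ T := by
    intro w
    rw [hGdef, ← hT]
    exact Finset.card_filter_le _ _
  have sumbound : ∑ w : Fin d → Fin M, (T - G w) ≤ T * ((T-1) * M^(d-1)) := by
    have hterm : ∀ w : Fin d → Fin M, T - G w =
        (I.filter fun k => ¬ (∀ h ∈ I, h ≠ k →
          (∑ i, k i * ((w i : ℕ) : ℤ)) % (M : ℤ)
            ≠ (∑ i, h i * ((w i : ℕ) : ℤ)) % (M : ℤ))).card := by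
      intro w
      simp only [hGdef]
      exact card_filter_not_eq' I T hT _
    calc ∑ w : Fin d → Fin M, (T - G w)
        = ∑ w : Fin d → Fin M, ∑ k ∈ I, (if ¬ (∀ h ∈ I, h ≠ k →
            (∑ i, k i * ((w i : ℕ) : ℤ)) % (M : ℤ)
              ≠ (∑ i, h i * ((w i : ℕ) : ℤ)) % (M : ℤ)) then 1 else 0) := by
          refine Finset.sum_congr rfl fun w _ => ?_
          rw [hterm w, Finset.card_filter]
      _ = ∑ k ∈ I, ∑ w : Fin d → Fin M, (if ¬ (∀ h ∈ I, h ≠ k →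
            (∑ i, k i * ((w i : ℕ) : ℤ)) % (M : ℤ)
              ≠ (∑ i, h i * ((w i : ℕ) : ℤ)) % (M : ℤ)) then 1 else 0) :=
          Finset.sum_comm
      _ ≤ ∑ _k ∈ I, (T-1) * M^(d-1) := by
          refine Finset.sum_le_sum fun k hk => ?_
          rw [← Finset.card_filter]
          -- bound the number of aliasing w for fixed k
          have hsub : (Finset.univ.filter fun w : Fin d → Fin M =>
              ¬ (∀ h ∈ I, h ≠ k →
                (∑ i, k i * ((w i : ℕ) : ℤ)) % (M : ℤ)
                  ≠ (∑ i, h i * ((w i : ℕ) : ℤ)) % (M : ℤ))) ⊆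
              (I.erase k).biUnion fun h => Finset.univ.filter fun w : Fin d → Fin M =>
                (M:ℤ) ∣ ∑ i, (h i - k i) * ((w i : ℕ) : ℤ) := by
            intro w hw
            rw [Finset.mem_filter] at hw
            obtain ⟨-, hw⟩ := hw
            push_neg at hw
            obtain ⟨h, hhI, hhk, heq⟩ := hw
            rw [Finset.mem_biUnion]
            refine ⟨h, Finset.mem_erase.mpr ⟨hhk, hhI⟩, ?_⟩
            rw [Finset.mem_filter]
            refine ⟨Finset.mem_univ _, ?_⟩
            have hmod : (M:ℤ) ∣ (∑ i, h i * ((w i : ℕ) : ℤ)) -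
                (∑ i, k i * ((w i : ℕ) : ℤ)) := Int.ModEq.dvd heq
            have : (∑ i, h i * ((w i : ℕ) : ℤ)) - (∑ i, k i * ((w i : ℕ) : ℤ))
                = ∑ i, (h i - k i) * ((w i : ℕ) : ℤ) := by
              rw [← Finset.sum_sub_distrib]
              exact Finset.sum_congr rfl fun i _ => by ring
            rwa [this] at hmod
          calc (Finset.univ.filter fun w : Fin d → Fin M =>
              ¬ (∀ h ∈ I, h ≠ k →
                (∑ i, k i * ((w i : ℕ) : ℤ)) % (M : ℤ)
                  ≠ (∑ i, h i * ((w i : ℕ) : ℤ)) % (M : ℤ))).card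
              ≤ ((I.erase k).biUnion fun h => Finset.univ.filter fun w : Fin d → Fin M =>
                (M:ℤ) ∣ ∑ i, (h i - k i) * ((w i : ℕ) : ℤ)).card :=
              Finset.card_le_card hsub
            _ ≤ ∑ h ∈ I.erase k, (Finset.univ.filter fun w : Fin d → Fin M =>
                (M:ℤ) ∣ ∑ i, (h i - k i) * ((w i : ℕ) : ℤ)).card :=
              Finset.card_biUnion_le
            _ ≤ ∑ _h ∈ I.erase k, M^(d-1) := by
              refine Finset.sum_le_sum fun h hh => ?_
              rw [Finset.mem_erase] at hh
              obtain ⟨hhk, hhI⟩ := hh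
              obtain ⟨j, hj⟩ := Function.ne_iff.mp hhk
              apply count_dvd_le' hMp
              intro hdvd
              have habs : |h j - k j| < (M:ℤ) := by
                have h1 : ((h j - k j : ℤ) : ℝ) ≤ lam := hlam2 h hhI k hk j
                have h2 : ((k j - h j : ℤ) : ℝ) ≤ lam := hlam2 k hk h hhI j
                have : |((h j - k j : ℤ) : ℝ)| < (M:ℝ) := by
                  rw [abs_lt]
                  push_cast at h1 h2 ⊢
                  constructor <;> linarith
                rw [← Int.cast_abs] at this
                exact_mod_cast this
              have := Int.eq_zero_of_abs_lt_dvd hdvd habs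
              exact hj (by omega)
            _ = (T-1) * M^(d-1) := by
              rw [Finset.sum_const, Finset.card_erase_of_mem hk, hT, smul_eq_mul]
      _ = T * ((T-1) * M^(d-1)) := by rw [Finset.sum_const, hT, smul_eq_mul]
  -- bad set
  set Bad : Finset (Fin d → Fin M) := Finset.univ.filter (fun w => s * G w < T) with hBad
  set q : ℕ := (T-1)/s with hq
  set m : ℕ := T - q with hm
  have hqs : q * s ≤ T - 1 := Nat.div_mul_le_self _ _
  have hqT : q < T := by
    have : q ≤ T - 1 := Nat.div_le_self _ _
    omega
  have hm1 : 1 ≤ m := by omega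
  have hBadm : Bad.card * m ≤ T * ((T-1) * M^(d-1)) := by
    calc Bad.card * m = ∑ _w ∈ Bad, m := by rw [Finset.sum_const, smul_eq_mul]
      _ ≤ ∑ w ∈ Bad, (T - G w) := by
          refine Finset.sum_le_sum fun w hw => ?_
          rw [hBad, Finset.mem_filter] at hw
          have hGw : G w ≤ q := by
            rw [hq]
            apply Nat.le_div_iff_mul_le hspos |>.mpr
            have h2 := hw.2
            have h3 : G w * s = s * G w := Nat.mul_comm _ _
            omega
          omega
      _ ≤ ∑ w : Fin d → Fin M, (T - G w) :=
          Finset.sum_le_sum_of_subset (Finset.filter_subset _ _)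
      _ ≤ T * ((T-1) * M^(d-1)) := sumbound
  -- counting the good tuples
  set P : (Fin s → Fin d → Fin M) → Prop := fun z =>
    ∃ ℓ : Fin s, (T : ℝ) / s ≤ (G (z ℓ) : ℝ) with hP
  have hcardP : Nat.card {z : Fin s → Fin d → Fin M // P z}
      = (Finset.univ.filter P).card := by
    rw [Nat.card_eq_fintype_card, Fintype.card_subtype]
  have huniv : (Finset.univ : Finset (Fin s → Fin d → Fin M)).card = (M^d)^s := by
    rw [Finset.card_univ, Fintype.card_fun, Fintype.card_fun, Fintype.card_fin,
      Fintype.card_fin, Fintype.card_fin]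
  have hsplit : (Finset.univ.filter P).card + (Finset.univ.filter fun z => ¬ P z).card
      = (M^d)^s := by
    rw [Finset.card_filter_add_card_filter_not, huniv]
  have hnegP : (Finset.univ.filter fun z => ¬ P z)
      = Fintype.piFinset (fun _ : Fin s => Bad) := by
    ext z
    rw [Finset.mem_filter, Fintype.mem_piFinset]
    simp only [Finset.mem_univ, true_and, hP]
    push_neg
    constructor
    · intro hz ℓ
      rw [hBad, Finset.mem_filter]
      refine ⟨Finset.mem_univ _, ?_⟩
      have := hz ℓ
      have h2 : (G (z ℓ) : ℝ) * s < T := by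
        rw [← lt_div_iff₀ hsR]
        exact this
      have : ((s * G (z ℓ) : ℕ) : ℝ) < (T:ℝ) := by push_cast; linarith [h2]
      exact_mod_cast this
    · intro hz ℓ
      have := hz ℓ
      rw [hBad, Finset.mem_filter] at this
      have h2 : ((s * G (z ℓ) : ℕ) : ℝ) < (T:ℝ) := by exact_mod_cast this.2
      push_cast at h2
      rw [lt_div_iff₀ hsR]
      linarith [h2]
  have hnegcard : (Finset.univ.filter fun z => ¬ P z).card = Bad.card ^ s := by
    rw [hnegP, Fintype.card_piFinset]
    simp [Finset.prod_const]
  -- the key real inequality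
  have hBadR : (Bad.card : ℝ) ^ s ≤ δ / T1 * ((M:ℝ)^d)^s := by
    have hmR : (0:ℝ) < (m:ℕ) := by exact_mod_cast hm1
    have hTR : (0:ℝ) < (T:ℝ) := by positivity
    have hT1R : (0:ℝ) < (T1:ℝ) := by
      have : (0:ℕ) < T1 := by omega
      exact_mod_cast this
    have hTm1R : (1:ℝ) ≤ ((T-1:ℕ):ℝ) := by
      have : (1:ℕ) ≤ T - 1 := by omega
      exact_mod_cast this
    have hTm1cast : ((T-1:ℕ):ℝ) = (T:ℝ) - 1 := by
      push_cast [show 1 ≤ T by omega]; ring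
    -- B ≤ T (T-1) M^(d-1) / m
    have hB1 : (Bad.card : ℝ) * m ≤ (T:ℝ) * (((T-1:ℕ):ℝ) * (M:ℝ)^(d-1)) := by
      exact_mod_cast hBadm
    have hB2 : (Bad.card : ℝ) ≤ (T:ℝ) * (((T-1:ℕ):ℝ) * (M:ℝ)^(d-1)) / m := by
      rw [le_div_iff₀ hmR]; exact hB1
    have hBnonneg : (0:ℝ) ≤ (Bad.card : ℝ) := by positivity
    have hB3 : (Bad.card : ℝ)^s ≤ ((T:ℝ) * (((T-1:ℕ):ℝ) * (M:ℝ)^(d-1)))^s / ((m:ℕ):ℝ)^s := by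
      rw [← div_pow]
      exact pow_le_pow_left₀ hBnonneg hB2 s
    -- use pow_aux' : T^s ≤ T * m^s
    have hpa : (T:ℝ)^s ≤ (T:ℝ) * ((m:ℕ):ℝ)^s := by
      have := pow_aux' hT2 hspos hqs
      rwa [← hm] at this
    -- so 1/m^s ≤ T / T^s
    have hmain : ((T:ℝ) * (((T-1:ℕ):ℝ) * (M:ℝ)^(d-1)))^s / ((m:ℕ):ℝ)^s
        ≤ (T:ℝ) * (((T-1:ℕ):ℝ))^s * ((M:ℝ)^(d-1))^s := by
      rw [div_le_iff₀ (by positivity)]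
      have hexp : ((T:ℝ) * (((T-1:ℕ):ℝ) * (M:ℝ)^(d-1)))^s
          = (T:ℝ)^s * ((T-1:ℕ):ℝ)^s * ((M:ℝ)^(d-1))^s := by
        rw [mul_pow, mul_pow]; ring
      rw [hexp]
      calc (T:ℝ)^s * ((T-1:ℕ):ℝ)^s * ((M:ℝ)^(d-1))^s
          ≤ ((T:ℝ) * ((m:ℕ):ℝ)^s) * ((T-1:ℕ):ℝ)^s * ((M:ℝ)^(d-1))^s := by
            have h1 : (0:ℝ) ≤ ((T-1:ℕ):ℝ)^s := by positivity
            have h2 : (0:ℝ) ≤ ((M:ℝ)^(d-1))^s := by positivity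
            exact mul_le_mul_of_nonneg_right (mul_le_mul_of_nonneg_right hpa h1) h2
        _ = (T:ℝ) * ((T-1:ℕ):ℝ)^s * ((M:ℝ)^(d-1))^s * ((m:ℕ):ℝ)^s := by ring
    -- now use c^s ≥ T*T1/δ and M ≥ c(T-1)
    have hMc : c * ((T:ℝ)-1) ≤ (M:ℝ) := le_trans hlam1 hMgt.le
    have hexpL : Real.exp L ≤ c^s := exp_bound' hc hL0.le hs
    have hexpL2 : (T:ℝ) * T1 / δ ≤ c^s := by
      have : Real.exp L = (T:ℝ) * T1 / δ := by
        rw [hLdef, Real.exp_sub, Real.exp_add, Real.exp_log hTR, Real.exp_log hT1R,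
          Real.exp_log hδ0]
      rwa [this] at hexpL
    -- final: T * (T-1)^s * M^((d-1)s) ≤ (δ/T1) M^(ds)
    have hfinal : (T:ℝ) * (((T-1:ℕ):ℝ))^s * ((M:ℝ)^(d-1))^s ≤ δ / T1 * ((M:ℝ)^d)^s := by
      have hMds : ((M:ℝ)^d)^s = ((M:ℝ)^(d-1))^s * (M:ℝ)^s := by
        obtain ⟨e, rfl⟩ : ∃ e, d = e + 1 := ⟨d - 1, by omega⟩
        rw [← pow_mul, ← pow_mul, ← pow_add]
        congr 1
        rw [Nat.add_sub_cancel]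
        ring
      rw [hMds]
      have hcs : c^s * ((T:ℝ)-1)^s ≤ (M:ℝ)^s := by
        rw [← mul_pow]
        have hTge1 : (1:ℝ) ≤ (T:ℝ) := by exact_mod_cast (by omega : 1 ≤ T)
        apply pow_le_pow_left₀ (mul_nonneg (by linarith) (by linarith)) hMc
      have hδT1 : (0:ℝ) < δ / T1 := by positivity
      have step : (T:ℝ) * (((T-1:ℕ):ℝ))^s ≤ δ / T1 * (M:ℝ)^s := by
        rw [hTm1cast]
        calc (T:ℝ) * ((T:ℝ)-1)^s = (δ/T1) * ((T:ℝ)*T1/δ) * ((T:ℝ)-1)^s := by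
              field_simp
          _ ≤ (δ/T1) * c^s * ((T:ℝ)-1)^s := by
              have h1 : (0:ℝ) ≤ ((T:ℝ)-1)^s := by
                rw [← hTm1cast]; positivity
              exact mul_le_mul_of_nonneg_right
                (mul_le_mul_of_nonneg_left hexpL2 hδT1.le) h1
          _ = (δ/T1) * (c^s * ((T:ℝ)-1)^s) := by ring
          _ ≤ (δ/T1) * (M:ℝ)^s := mul_le_mul_of_nonneg_left hcs hδT1.le
      calc (T:ℝ) * (((T-1:ℕ):ℝ))^s * ((M:ℝ)^(d-1))^s
          ≤ (δ / T1 * (M:ℝ)^s) * ((M:ℝ)^(d-1))^s := by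
            have : (0:ℝ) ≤ ((M:ℝ)^(d-1))^s := by positivity
            exact mul_le_mul_of_nonneg_right step this
        _ = δ / T1 * (((M:ℝ)^(d-1))^s * (M:ℝ)^s) := by ring
    calc (Bad.card : ℝ)^s ≤ ((T:ℝ) * (((T-1:ℕ):ℝ) * (M:ℝ)^(d-1)))^s / ((m:ℕ):ℝ)^s := hB3
      _ ≤ (T:ℝ) * (((T-1:ℕ):ℝ))^s * ((M:ℝ)^(d-1))^s := hmain
      _ ≤ δ / T1 * ((M:ℝ)^d)^s := hfinal
  -- assemble
  have hgoalcast : ((M:ℝ)^d)^s = (((M^d)^s : ℕ) : ℝ) := by push_cast; ring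
  have hBle : Bad.card ≤ M^d := by
    calc Bad.card ≤ (Finset.univ : Finset (Fin d → Fin M)).card :=
          Finset.card_filter_le _ _
      _ = M^d := by rw [Finset.card_univ, Fintype.card_fun, Fintype.card_fin, Fintype.card_fin]
  have hle : Bad.card ^ s ≤ (M^d)^s := Nat.pow_le_pow_left hBle s
  have hNatcard : (Nat.card {z : Fin s → Fin d → Fin M // P z} : ℝ)
      = (((M^d)^s : ℕ) : ℝ) - (Bad.card : ℝ)^s := by
    rw [hcardP]
    have : (Finset.univ.filter P).card = (M^d)^s - Bad.card ^ s := by omega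
    rw [this]
    push_cast [hle]
    ring
  show (1 - δ / T1) * ((M : ℝ) ^ d) ^ s ≤
      (Nat.card {z : Fin s → Fin d → Fin M // P z} : ℝ)
  rw [hNatcard, ← hgoalcast]
  have : (1 - δ / T1) * ((M:ℝ)^d)^s = ((M:ℝ)^d)^s - δ/T1 * ((M:ℝ)^d)^s := by ring
  rw [this]
  linarith [hBadR]
end
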